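/- Let f be a self-concordant function on R^n with Hessian H(θ), local norms ‖v‖_θ = √⟨v, H(θ)v⟩, and let θ₀, θ₁ satisfy Δ := ‖θ₁ − θ₀‖_{θ₀} < 1. Let μ₀ and μ₁ be the Boltzmann distributions on a convex body K with parameters θ₀, θ₁ (density proportional to e^{⟨θ_i,x⟩}), where f(θ) = ln ∫_K e^{⟨θ,x⟩}dx. Then the L²-norm satisfies ‖μ₀/μ₁‖ ≤ exp(−2Δ)/(1−Δ)², and ‖μ₀/μ₁‖ ≥ exp(Δ²[1 + Δ²/6 − 2Δ/3]). -/

import Mathlib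

open MeasureTheory
open scoped RealInnerProductSpace

/-- The Boltzmann distribution on `K` with parameter `θ`. -/
noncomputable def boltzmann {n : ℕ} (K : Set (EuclideanSpace ℝ (Fin n)))
    (θ : EuclideanSpace ℝ (Fin n)) : Measure (EuclideanSpace ℝ (Fin n)) :=
  let ν := (volume.restrict K).withDensity fun x => ENNReal.ofReal (Real.exp ⟪θ, x⟫)
  (ν Set.univ)⁻¹ • ν

/-- The mean of a measure on Euclidean space. -/
noncomputable def meanVec {n : ℕ} (μ : Measure (EuclideanSpace ℝ (Fin n))) :
    EuclideanSpace ℝ (Fin n) := ∫ x, x ∂μ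

/-- The covariance bilinear form of a measure; for the Boltzmann distribution with
parameter `θ` this is the Hessian `H(θ)` of the log partition function `f`. -/
noncomputable def covForm {n : ℕ} (μ : Measure (EuclideanSpace ℝ (Fin n)))
    (v w : EuclideanSpace ℝ (Fin n)) : ℝ :=
  ∫ x, ⟪x - meanVec μ, v⟫ * ⟪x - meanVec μ, w⟫ ∂μ

/-- The local norm `‖v‖_θ = √⟨v, H(θ)v⟩` induced by the Hessian of the log partition
function of `K`. -/
noncomputable def lnorm {n : ℕ} (K : Set (EuclideanSpace ℝ (Fin n)))
    (θ v : EuclideanSpace ℝ (Fin n)) : ℝ :=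
  Real.sqrt (covForm (boltzmann K θ) v v)

open scoped ENNReal


namespace Stmt8Aux

variable {n : ℕ} {K : Set (EuclideanSpace ℝ (Fin n))}

local notation "E" => EuclideanSpace ℝ (Fin n)

/-- the partition function -/
noncomputable def Zf (K : Set (EuclideanSpace ℝ (Fin n))) (θ : EuclideanSpace ℝ (Fin n)) : ℝ :=
  ∫ x in K, Real.exp ⟪θ, x⟫

lemma contExp (θ : E) : Continuous fun x : E => Real.exp ⟪θ, x⟫ :=
  Real.continuous_exp.comp (continuous_const.inner continuous_id)

lemma Zint (hKcomp : IsCompact K) (θ : E) :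
    IntegrableOn (fun x => Real.exp ⟪θ, x⟫) K volume :=
  (contExp θ).continuousOn.integrableOn_compact hKcomp

lemma Zpos (hKcomp : IsCompact K) (hKint : (interior K).Nonempty) (θ : E) : 0 < Zf K θ := by
  rw [Zf]
  rw [setIntegral_pos_iff_support_of_nonneg_ae
    (Filter.Eventually.of_forall fun x => (Real.exp_pos _).le) (Zint hKcomp θ)]
  have h1 : (0:ℝ≥0∞) < volume (interior K) := isOpen_interior.measure_pos volume hKint
  refine h1.trans_le (measure_mono ?_)
  intro x hx
  exact ⟨fun h => absurd h (ne_of_gt (Real.exp_pos _)), interior_subset hx⟩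

lemma covForm_self_nonneg (μ : Measure E) (v : E) : 0 ≤ covForm μ v v :=
  integral_nonneg fun x => mul_self_nonneg _

lemma lnorm_nonneg (θ v : E) : 0 ≤ lnorm K θ v := Real.sqrt_nonneg _

lemma sq_lnorm (θ v : E) : lnorm K θ v ^ 2 = covForm (boltzmann K θ) v v :=
  Real.sq_sqrt (covForm_self_nonneg _ _)

lemma lnorm_smul (θ v : E) (t : ℝ) : lnorm K θ (t • v) = |t| * lnorm K θ v := by
  have : covForm (boltzmann K θ) (t • v) (t • v) = t ^ 2 * covForm (boltzmann K θ) v v := by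
    rw [covForm, covForm, ← integral_const_mul]
    congr 1; funext x
    rw [real_inner_smul_right]; ring
  rw [lnorm, lnorm, this, Real.sqrt_mul (sq_nonneg t), Real.sqrt_sq_eq_abs]

lemma measK (hKcomp : IsCompact K) : MeasurableSet K := hKcomp.isClosed.measurableSet

lemma nu_univ (hKcomp : IsCompact K) (θ : E) :
    ((volume.restrict K).withDensity fun x => ENNReal.ofReal (Real.exp ⟪θ, x⟫)) Set.univ
      = ENNReal.ofReal (Zf K θ) := by
  rw [withDensity_apply _ MeasurableSet.univ, Measure.restrict_univ,
    ← ofReal_integral_eq_lintegral_ofReal (Zint hKcomp θ)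
      (Filter.Eventually.of_forall fun x => (Real.exp_pos _).le)]
  rfl

lemma boltzmann_eq (hKcomp : IsCompact K) (θ : E) :
    boltzmann K θ = (ENNReal.ofReal (Zf K θ))⁻¹ •
      ((volume.restrict K).withDensity fun x => ENNReal.ofReal (Real.exp ⟪θ, x⟫)) := by
  rw [boltzmann]
  simp only [nu_univ hKcomp θ]

lemma isProb (hKcomp : IsCompact K) (hKint : (interior K).Nonempty) (θ : E) :
    IsProbabilityMeasure (boltzmann K θ) := by
  constructor
  rw [boltzmann_eq hKcomp θ]
  rw [Measure.smul_apply, nu_univ hKcomp θ, smul_eq_mul]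
  exact ENNReal.inv_mul_cancel (by simp [Zpos hKcomp hKint θ]) ENNReal.ofReal_ne_top

end Stmt8Aux

namespace Stmt8Aux

open scoped NNReal

variable {n : ℕ} {K : Set (EuclideanSpace ℝ (Fin n))}

local notation "E" => EuclideanSpace ℝ (Fin n)

lemma measNN (θ : E) : Measurable fun x : E => Real.toNNReal (Real.exp ⟪θ, x⟫) :=
  measurable_real_toNNReal.comp (contExp θ).measurable

lemma integral_boltzmann {F : Type*} [NormedAddCommGroup F] [NormedSpace ℝ F]
    (hKcomp : IsCompact K) (hKint : (interior K).Nonempty) (θ : E) (φ : E → F) :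
    ∫ x, φ x ∂(boltzmann K θ) = (Zf K θ)⁻¹ • ∫ x in K, Real.exp ⟪θ, x⟫ • φ x := by
  rw [boltzmann_eq hKcomp θ, integral_smul_measure]
  rw [show (fun x : E => ENNReal.ofReal (Real.exp ⟪θ, x⟫))
      = fun x => ((Real.toNNReal (Real.exp ⟪θ, x⟫) : ℝ≥0) : ℝ≥0∞) from rfl]
  rw [integral_withDensity_eq_integral_smul (measNN θ) φ]
  rw [ENNReal.toReal_inv, ENNReal.toReal_ofReal (Zpos hKcomp hKint θ).le]
  congr 1
  refine setIntegral_congr_fun (measK hKcomp) fun x _ => ?_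
  rw [NNReal.smul_def, Real.coe_toNNReal _ (Real.exp_pos _).le]

lemma integrable_boltzmann {F : Type*} [NormedAddCommGroup F] [NormedSpace ℝ F]
    (hKcomp : IsCompact K) (hKint : (interior K).Nonempty) (θ : E) (φ : E → F)
    (hφ : Continuous φ) : Integrable φ (boltzmann K θ) := by
  rw [boltzmann_eq hKcomp θ]
  refine Integrable.smul_measure ?_ (by
    simp [Zpos hKcomp hKint θ, ENNReal.inv_ne_top])
  rw [show (fun x : E => ENNReal.ofReal (Real.exp ⟪θ, x⟫))
      = fun x => ((Real.toNNReal (Real.exp ⟪θ, x⟫) : ℝ≥0) : ℝ≥0∞) from rfl]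
  rw [integrable_withDensity_iff_integrable_smul (measNN θ)]
  have h : IntegrableOn (fun x => Real.exp ⟪θ, x⟫ • φ x) K volume :=
    ((contExp θ).smul hφ).continuousOn.integrableOn_compact hKcomp
  refine h.congr_fun (fun x _ => ?_) (measK hKcomp)
  rw [NNReal.smul_def, Real.coe_toNNReal _ (Real.exp_pos _).le]

lemma covForm_eq_moments (hKcomp : IsCompact K) (hKint : (interior K).Nonempty) (θ u : E) :
    covForm (boltzmann K θ) u u =
      (∫ x, ⟪u, x⟫ ^ 2 ∂(boltzmann K θ)) - (∫ x, ⟪u, x⟫ ∂(boltzmann K θ)) ^ 2 := by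
  haveI := isProb hKcomp hKint θ
  set μ := boltzmann K θ with hμ
  have hid : Integrable (fun x : E => x) μ :=
    integrable_boltzmann hKcomp hKint θ _ continuous_id
  have h1 : Integrable (fun x : E => ⟪u, x⟫) μ :=
    integrable_boltzmann hKcomp hKint θ _ (continuous_const.inner continuous_id)
  have h2 : Integrable (fun x : E => ⟪u, x⟫ ^ 2) μ :=
    integrable_boltzmann hKcomp hKint θ _ ((continuous_const.inner continuous_id).pow 2)
  set a := ∫ x, ⟪u, x⟫ ∂μ with ha
  have hm : ⟪u, meanVec μ⟫ = a := by
    rw [meanVec, ← integral_inner hid u]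
  have key : ∀ x : E, ⟪x - meanVec μ, u⟫ * ⟪x - meanVec μ, u⟫
      = ⟪u, x⟫ ^ 2 - (2 * a) * ⟪u, x⟫ + a ^ 2 := by
    intro x
    rw [real_inner_comm, inner_sub_right, hm]
    ring
  rw [covForm]
  simp_rw [key]
  have h12 : Integrable (fun x : E => ⟪u, x⟫ ^ 2 - (2 * a) * ⟪u, x⟫) μ :=
    h2.sub (h1.const_mul (2 * a))
  have h1' : Integrable (fun x : E => (2 * a) * ⟪u, x⟫) μ := h1.const_mul (2 * a)
  rw [integral_add h12 (integrable_const _), integral_sub h2 h1', integral_const_mul,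
    integral_const, probReal_univ]
  simp only [ENNReal.toReal_one, one_smul]
  rw [← ha]
  ring

end Stmt8Aux

namespace Stmt8Aux
variable {n : ℕ} {K : Set (EuclideanSpace ℝ (Fin n))}
local notation "E" => EuclideanSpace ℝ (Fin n)


lemma inner_line (θ₀ u x : E) (t : ℝ) : ⟪θ₀ + t • u, x⟫ = ⟪θ₀, x⟫ + t * ⟪u, x⟫ := by
  rw [inner_add_left, real_inner_smul_left]

lemma hasDerivAt_param (hKcomp : IsCompact K) (hne : K.Nonempty) (θ₀ u : E)
    (φ : E → ℝ) (hφ : Continuous φ) (t₀ : ℝ) :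
    HasDerivAt (fun t : ℝ => ∫ x in K, φ x * Real.exp ⟪θ₀ + t • u, x⟫)
      (∫ x in K, φ x * ⟪u, x⟫ * Real.exp ⟪θ₀ + t₀ • u, x⟫) t₀ := by
  obtain ⟨x₀, hx₀⟩ := hne
  obtain ⟨R, hR⟩ := hKcomp.isBounded.subset_closedBall 0
  have hRmem : ∀ x ∈ K, ‖x‖ ≤ R := fun x hx => mem_closedBall_zero_iff.1 (hR hx)
  have hR0 : 0 ≤ R := le_trans (norm_nonneg _) (hRmem _ hx₀)
  obtain ⟨M, hM⟩ := hKcomp.exists_bound_of_continuousOn hφ.continuousOn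
  have hM0 : 0 ≤ M := le_trans (norm_nonneg _) (hM _ hx₀)
  set D : ℝ := (‖θ₀‖ + (|t₀| + 1) * ‖u‖) * R with hD
  set B : ℝ := M * (‖u‖ * R) * Real.exp D with hB
  have hdiff : ∀ (x : E) (t : ℝ),
      HasDerivAt (fun s : ℝ => φ x * Real.exp ⟪θ₀ + s • u, x⟫)
        (φ x * ⟪u, x⟫ * Real.exp ⟪θ₀ + t • u, x⟫) t := by
    intro x t
    have h1 : HasDerivAt (fun s : ℝ => ⟪θ₀, x⟫ + s * ⟪u, x⟫) ⟪u, x⟫ t := by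
      simpa using ((hasDerivAt_id t).mul_const ⟪u, x⟫).const_add ⟪θ₀, x⟫
    have h2 := (h1.exp).const_mul (φ x)
    simp only [inner_line θ₀ u x]
    exact h2.congr_deriv (by ring)
  have claim := hasDerivAt_integral_of_dominated_loc_of_deriv_le
    (μ := volume.restrict K)
    (F := fun t x => φ x * Real.exp ⟪θ₀ + t • u, x⟫)
    (F' := fun t x => φ x * ⟪u, x⟫ * Real.exp ⟪θ₀ + t • u, x⟫)
    (bound := fun _ => B) (x₀ := t₀) (Metric.ball_mem_nhds t₀ one_pos)
    (Filter.Eventually.of_forall fun t =>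
      (hφ.mul (contExp (θ₀ + t • u))).aestronglyMeasurable)
    (((hφ.mul (contExp (θ₀ + t₀ • u))).continuousOn).integrableOn_compact hKcomp)
    (((hφ.mul (continuous_const.inner continuous_id)).mul
      (contExp (θ₀ + t₀ • u))).aestronglyMeasurable)
    ?_ ?_ ?_
  · exact claim.2
  · -- bound
    refine (ae_restrict_mem (measK hKcomp)).mono fun x hx => ?_
    intro t ht
    have ht' : |t| ≤ |t₀| + 1 := by
      have : |t - t₀| < 1 := by simpa [Real.dist_eq] using ht
      calc |t| = |t₀ + (t - t₀)| := by ring_nf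
        _ ≤ |t₀| + |t - t₀| := abs_add_le _ _
        _ ≤ |t₀| + 1 := by linarith
    have hc : ⟪θ₀ + t • u, x⟫ ≤ D := by
      calc ⟪θ₀ + t • u, x⟫ ≤ |⟪θ₀ + t • u, x⟫| := le_abs_self _
        _ ≤ ‖θ₀ + t • u‖ * ‖x‖ := abs_real_inner_le_norm _ _
        _ ≤ (‖θ₀‖ + (|t₀| + 1) * ‖u‖) * R := by
            have h3 : ‖θ₀ + t • u‖ ≤ ‖θ₀‖ + (|t₀| + 1) * ‖u‖ := by
              refine (norm_add_le _ _).trans ?_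
              rw [norm_smul, Real.norm_eq_abs]
              gcongr
            exact mul_le_mul h3 (hRmem x hx) (norm_nonneg _)
              (by positivity)
    have hinner : |⟪u, x⟫| ≤ ‖u‖ * R :=
      (abs_real_inner_le_norm _ _).trans
        (mul_le_mul_of_nonneg_left (hRmem x hx) (norm_nonneg _))
    calc ‖φ x * ⟪u, x⟫ * Real.exp ⟪θ₀ + t • u, x⟫‖
        = |φ x| * |⟪u, x⟫| * Real.exp ⟪θ₀ + t • u, x⟫ := by
          rw [Real.norm_eq_abs, abs_mul, abs_mul, Real.abs_exp]
      _ ≤ M * (‖u‖ * R) * Real.exp D := by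
          have := hM x hx
          rw [Real.norm_eq_abs] at this
          gcongr
      _ = B := rfl
  · exact (integrableOn_const_iff (by simp)).2 (Or.inr hKcomp.measure_lt_top)
  · exact Filter.Eventually.of_forall fun x t _ => hdiff x t

end Stmt8Aux

namespace Stmt8Aux
variable {n : ℕ} {K : Set (EuclideanSpace ℝ (Fin n))}
local notation "E" => EuclideanSpace ℝ (Fin n)

lemma nonneg_of_deriv (F F' : ℝ → ℝ)
    (hd : ∀ t ∈ Set.Icc (0:ℝ) 1, HasDerivAt F (F' t) t)
    (h0 : F 0 = 0) (hF' : ∀ t ∈ Set.Icc (0:ℝ) 1, 0 ≤ F' t) :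
    ∀ t ∈ Set.Icc (0:ℝ) 1, 0 ≤ F t := by
  have mono : MonotoneOn F (Set.Icc 0 1) := by
    apply monotoneOn_of_deriv_nonneg (convex_Icc 0 1)
    · exact fun t ht => (hd t ht).continuousAt.continuousWithinAt
    · intro t ht
      rw [interior_Icc] at ht
      exact ((hd t (Set.mem_Icc_of_Ioo ht)).differentiableAt).differentiableWithinAt
    · intro t ht
      rw [interior_Icc] at ht
      rw [(hd t (Set.mem_Icc_of_Ioo ht)).deriv]
      exact hF' t (Set.mem_Icc_of_Ioo ht)
  intro t ht
  have := mono (Set.left_mem_Icc.2 zero_le_one) ht ht.1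
  rwa [h0] at this

end Stmt8Aux

open Stmt8Aux in
theorem stmt8 (n : ℕ) (K : Set (EuclideanSpace ℝ (Fin n)))
    (hKconv : Convex ℝ K) (hKcomp : IsCompact K) (hKint : (interior K).Nonempty)
    -- self-concordance of the log partition function `f` of `K` (Bubeck–Eldan):
    (hsc : ∀ θ₀ θ₁ v : EuclideanSpace ℝ (Fin n), lnorm K θ₀ (θ₁ - θ₀) < 1 →
      (1 - lnorm K θ₀ (θ₁ - θ₀)) * lnorm K θ₀ v ≤ lnorm K θ₁ v ∧
        lnorm K θ₁ v ≤ lnorm K θ₀ v / (1 - lnorm K θ₀ (θ₁ - θ₀)))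
    (θ₀ θ₁ : EuclideanSpace ℝ (Fin n))
    (hΔ : lnorm K θ₀ (θ₁ - θ₀) < 1) :
    Real.exp ((lnorm K θ₀ (θ₁ - θ₀)) ^ 2 *
        (1 + (lnorm K θ₀ (θ₁ - θ₀)) ^ 2 / 6 - 2 * lnorm K θ₀ (θ₁ - θ₀) / 3)) ≤
      (∫ x, ((boltzmann K θ₀).rnDeriv (boltzmann K θ₁) x).toReal ∂(boltzmann K θ₀)) ∧
    (∫ x, ((boltzmann K θ₀).rnDeriv (boltzmann K θ₁) x).toReal ∂(boltzmann K θ₀)) ≤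
      Real.exp (-2 * lnorm K θ₀ (θ₁ - θ₀)) / (1 - lnorm K θ₀ (θ₁ - θ₀)) ^ 2 := by
  classical
  set u : EuclideanSpace ℝ (Fin n) := θ₁ - θ₀ with hu
  set Δ : ℝ := lnorm K θ₀ u with hΔdef
  have hΔ0 : 0 ≤ Δ := lnorm_nonneg θ₀ u
  have hne : K.Nonempty := hKint.mono interior_subset
  -- the one-dimensional partition function along the segment and its first two derivatives
  set h : ℝ → ℝ := fun t => ∫ x in K, Real.exp ⟪θ₀ + t • u, x⟫ with hhdef
  set h1 : ℝ → ℝ := fun t => ∫ x in K, ⟪u, x⟫ * Real.exp ⟪θ₀ + t • u, x⟫ with hh1def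
  set h2 : ℝ → ℝ := fun t => ∫ x in K, ⟪u, x⟫ * ⟪u, x⟫ * Real.exp ⟪θ₀ + t • u, x⟫ with hh2def
  have hpos : ∀ t : ℝ, 0 < h t := fun t => Zpos hKcomp hKint (θ₀ + t • u)
  have hh : ∀ t : ℝ, HasDerivAt h (h1 t) t := by
    intro t
    have := hasDerivAt_param hKcomp hne θ₀ u (fun _ => (1:ℝ)) continuous_const t
    simp only [one_mul] at this
    exact this
  have hh1 : ∀ t : ℝ, HasDerivAt h1 (h2 t) t := by
    intro t
    exact hasDerivAt_param hKcomp hne θ₀ u (fun x => ⟪u, x⟫)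
      (continuous_const.inner continuous_id) t
  -- the log partition function along the segment
  set g : ℝ → ℝ := fun t => Real.log (h t) with hgdef
  set g1 : ℝ → ℝ := fun t => h1 t / h t with hg1def
  set g2 : ℝ → ℝ := fun t => h2 t / h t - (h1 t / h t) ^ 2 with hg2def
  have hg : ∀ t : ℝ, HasDerivAt g (g1 t) t := fun t => (hh t).log (hpos t).ne'
  have hg1 : ∀ t : ℝ, HasDerivAt g1 (g2 t) t := by
    intro t
    have hne0 : h t ≠ 0 := (hpos t).ne'
    have hd := (hh1 t).div (hh t) hne0
    have heq : h2 t / h t - (h1 t / h t) ^ 2 = (h2 t * h t - h1 t * h1 t) / h t ^ 2 := by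
      field_simp
    rw [hg2def]
    show HasDerivAt g1 (h2 t / h t - (h1 t / h t) ^ 2) t
    rw [heq]
    exact hd
  -- identification of the second derivative with the squared local norm
  have hm1 : ∀ t : ℝ, (∫ x, ⟪u, x⟫ ∂(boltzmann K (θ₀ + t • u))) = h1 t / h t := by
    intro t
    rw [integral_boltzmann hKcomp hKint (θ₀ + t • u) (fun x => ⟪u, x⟫)]
    rw [smul_eq_mul, div_eq_inv_mul]
    congr 1
    refine setIntegral_congr_fun (measK hKcomp) fun x _ => ?_
    rw [smul_eq_mul, mul_comm]
  have hm2 : ∀ t : ℝ, (∫ x, ⟪u, x⟫ ^ 2 ∂(boltzmann K (θ₀ + t • u))) = h2 t / h t := by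
    intro t
    rw [integral_boltzmann hKcomp hKint (θ₀ + t • u) (fun x => ⟪u, x⟫ ^ 2)]
    rw [smul_eq_mul, div_eq_inv_mul]
    congr 1
    refine setIntegral_congr_fun (measK hKcomp) fun x _ => ?_
    rw [smul_eq_mul, mul_comm, pow_two]
  have hg2cov : ∀ t : ℝ, g2 t = (lnorm K (θ₀ + t • u) u) ^ 2 := by
    intro t
    rw [sq_lnorm, covForm_eq_moments hKcomp hKint, hm2 t, hm1 t]
  -- bounds on the second derivative from self-concordance
  have hbnd : ∀ t ∈ Set.Icc (0:ℝ) 1, ∀ s : ℝ, s = t ∨ s = -t →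
      ((1 - t * Δ) * Δ) ^ 2 ≤ (lnorm K (θ₀ + s • u) u) ^ 2 ∧
      (lnorm K (θ₀ + s • u) u) ^ 2 ≤ (Δ / (1 - t * Δ)) ^ 2 := by
    intro t ht s hs
    have htΔ : t * Δ < 1 :=
      lt_of_le_of_lt (mul_le_of_le_one_left hΔ0 ht.2) hΔ
    have h1tΔ : 0 < 1 - t * Δ := by linarith
    have hls : lnorm K θ₀ ((θ₀ + s • u) - θ₀) = t * Δ := by
      have h' : (θ₀ + s • u) - θ₀ = s • u := by abel
      rw [h', lnorm_smul, ← hΔdef]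
      rcases hs with rfl | rfl
      · rw [abs_of_nonneg ht.1]
      · rw [abs_neg, abs_of_nonneg ht.1]
    have hsc' := hsc θ₀ (θ₀ + s • u) u (by rw [hls]; exact htΔ)
    rw [hls] at hsc'
    rw [← hΔdef] at hsc'
    constructor
    · exact pow_le_pow_left₀ (by positivity) hsc'.1 2
    · exact pow_le_pow_left₀ (lnorm_nonneg _ _) hsc'.2 2
  -- the symmetrized function and its derivatives
  set F : ℝ → ℝ := fun t => g t + g (-t) - 2 * g 0 with hFdef
  set F1 : ℝ → ℝ := fun t => g1 t - g1 (-t) with hF1def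
  set F2 : ℝ → ℝ := fun t => g2 t + g2 (-t) with hF2def
  have hF : ∀ t : ℝ, HasDerivAt F (F1 t) t := by
    intro t
    have hneg : HasDerivAt (fun s : ℝ => g (-s)) (-(g1 (-t))) t := by
      have hcomp := (hg (-t)).comp t (hasDerivAt_neg t)
      rw [show g1 (-t) * -1 = -(g1 (-t)) by ring] at hcomp
      exact hcomp
    have hd := ((hg t).add hneg).sub_const (2 * g 0)
    rw [hF1def]
    show HasDerivAt F (g1 t - g1 (-t)) t
    rw [sub_eq_add_neg]
    exact hd
  have hF1 : ∀ t : ℝ, HasDerivAt F1 (F2 t) t := by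
    intro t
    have hneg : HasDerivAt (fun s : ℝ => g1 (-s)) (-(g2 (-t))) t := by
      have hcomp := (hg1 (-t)).comp t (hasDerivAt_neg t)
      rw [show g2 (-t) * -1 = -(g2 (-t)) by ring] at hcomp
      exact hcomp
    have hd := (hg1 t).sub hneg
    rw [hF2def]
    show HasDerivAt F1 (g2 t + g2 (-t)) t
    rw [show g2 t + g2 (-t) = g2 t - -(g2 (-t)) by ring]
    exact hd
  have hF0 : F 0 = 0 := by
    rw [hFdef]
    show g 0 + g (-0) - 2 * g 0 = 0
    rw [neg_zero]; ring
  have hF10 : F1 0 = 0 := by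
    rw [hF1def]
    show g1 0 - g1 (-0) = 0
    rw [neg_zero, sub_self]
  -- comparison functions
  set P : ℝ → ℝ := fun t => -(2 * Δ) * t - 2 * Real.log (1 - Δ * t) with hPdef
  set P1 : ℝ → ℝ := fun t => -(2 * Δ) + 2 * Δ / (1 - Δ * t) with hP1def
  set P2 : ℝ → ℝ := fun t => 2 * Δ ^ 2 / (1 - Δ * t) ^ 2 with hP2def
  set Q : ℝ → ℝ := fun t => (2 * Δ / 3) * t + ((1 - Δ * t) ^ 4 - 1) / 6 with hQdef
  set Q1 : ℝ → ℝ := fun t => 2 * Δ / 3 - (2 * Δ / 3) * (1 - Δ * t) ^ 3 with hQ1def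
  set Q2 : ℝ → ℝ := fun t => 2 * Δ ^ 2 * (1 - Δ * t) ^ 2 with hQ2def
  have hlin : ∀ t : ℝ, HasDerivAt (fun s : ℝ => 1 - Δ * s) (-Δ) t := by
    intro t
    simpa using ((hasDerivAt_id t).const_mul Δ).const_sub 1
  have hIccpos : ∀ t ∈ Set.Icc (0:ℝ) 1, 0 < 1 - Δ * t := by
    intro t ht
    have : Δ * t ≤ Δ := by
      calc Δ * t ≤ Δ * 1 := by
            exact mul_le_mul_of_nonneg_left ht.2 hΔ0
        _ = Δ := mul_one Δ
    linarith
  have hP : ∀ t ∈ Set.Icc (0:ℝ) 1, HasDerivAt P (P1 t) t := by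
    intro t ht
    have hne0 : 1 - Δ * t ≠ 0 := (hIccpos t ht).ne'
    have hlog := ((hlin t).log hne0).const_mul (2:ℝ)
    have hlinpart : HasDerivAt (fun s : ℝ => -(2 * Δ) * s) (-(2 * Δ)) t := by
      simpa using (hasDerivAt_id t).const_mul (-(2 * Δ))
    have hd := hlinpart.sub hlog
    rw [hP1def]
    dsimp only
    exact hd.congr_deriv (by field_simp; ring)
  have hP1 : ∀ t ∈ Set.Icc (0:ℝ) 1, HasDerivAt P1 (P2 t) t := by
    intro t ht
    have hne0 : 1 - Δ * t ≠ 0 := (hIccpos t ht).ne'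
    have hdiv := (hasDerivAt_const t (2 * Δ)).div (hlin t) hne0
    have hd := hdiv.const_add (-(2 * Δ))
    rw [hP2def]
    dsimp only
    exact hd.congr_deriv (by field_simp; ring)
  have hQ : ∀ t : ℝ, HasDerivAt Q (Q1 t) t := by
    intro t
    have hp4 := ((hlin t).pow 4).sub_const 1
    have hlinpart : HasDerivAt (fun s : ℝ => (2 * Δ / 3) * s) (2 * Δ / 3) t := by
      simpa using (hasDerivAt_id t).const_mul (2 * Δ / 3)
    have := hlinpart.add (hp4.div_const 6)
    exact this.congr_deriv (by simp only [hQ1def]; norm_num; ring)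
  have hQ1 : ∀ t : ℝ, HasDerivAt Q1 (Q2 t) t := by
    intro t
    have hp3 := (((hlin t).pow 3).const_mul (2 * Δ / 3)).const_sub (2 * Δ / 3)
    exact hp3.congr_deriv (by simp only [hQ2def]; norm_num; ring)
  have hP0 : P 0 = 0 := by
    rw [hPdef]
    show -(2 * Δ) * 0 - 2 * Real.log (1 - Δ * 0) = 0
    norm_num
  have hP10 : P1 0 = 0 := by
    rw [hP1def]
    show -(2 * Δ) + 2 * Δ / (1 - Δ * 0) = 0
    norm_num
  have hQ0 : Q 0 = 0 := by
    rw [hQdef]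
    show (2 * Δ / 3) * 0 + ((1 - Δ * 0) ^ 4 - 1) / 6 = 0
    norm_num
  have hQ10 : Q1 0 = 0 := by
    rw [hQ1def]
    show 2 * Δ / 3 - (2 * Δ / 3) * (1 - Δ * 0) ^ 3 = 0
    norm_num
  -- second-derivative comparisons on [0,1]
  have hF2eq : ∀ t : ℝ, F2 t = (lnorm K (θ₀ + t • u) u) ^ 2 + (lnorm K (θ₀ + (-t) • u) u) ^ 2 := by
    intro t
    rw [hF2def]
    show g2 t + g2 (-t) = _
    rw [hg2cov t, hg2cov (-t)]
  have hF2le : ∀ t ∈ Set.Icc (0:ℝ) 1, F2 t ≤ P2 t := by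
    intro t ht
    have hb1 := (hbnd t ht t (Or.inl rfl)).2
    have hb2 := (hbnd t ht (-t) (Or.inr rfl)).2
    have he : (Δ / (1 - t * Δ)) ^ 2 = Δ ^ 2 / (1 - Δ * t) ^ 2 := by
      rw [div_pow, mul_comm]
    rw [he] at hb1 hb2
    rw [hF2eq t, hP2def]
    show _ ≤ 2 * Δ ^ 2 / (1 - Δ * t) ^ 2
    have hpos2 : (0:ℝ) < 1 - Δ * t := by
      have h1 : Δ * t ≤ Δ := by
        calc Δ * t ≤ Δ * 1 := mul_le_mul_of_nonneg_left ht.2 hΔ0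
          _ = Δ := mul_one Δ
      linarith
    rw [show 2 * Δ ^ 2 / (1 - Δ * t) ^ 2
        = Δ ^ 2 / (1 - Δ * t) ^ 2 + Δ ^ 2 / (1 - Δ * t) ^ 2 by ring]
    exact add_le_add hb1 hb2
  have hQ2le : ∀ t ∈ Set.Icc (0:ℝ) 1, Q2 t ≤ F2 t := by
    intro t ht
    have hb1 := (hbnd t ht t (Or.inl rfl)).1
    have hb2 := (hbnd t ht (-t) (Or.inr rfl)).1
    have he : ((1 - t * Δ) * Δ) ^ 2 = Δ ^ 2 * (1 - Δ * t) ^ 2 := by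
      rw [mul_comm (t:ℝ) Δ]; ring
    rw [he] at hb1 hb2
    rw [hF2eq t, hQ2def]
    show 2 * Δ ^ 2 * (1 - Δ * t) ^ 2 ≤ _
    rw [show 2 * Δ ^ 2 * (1 - Δ * t) ^ 2
        = Δ ^ 2 * (1 - Δ * t) ^ 2 + Δ ^ 2 * (1 - Δ * t) ^ 2 by ring]
    exact add_le_add hb1 hb2
  -- integrate the comparisons twice
  have hupper1 : ∀ t ∈ Set.Icc (0:ℝ) 1, 0 ≤ P1 t - F1 t := by
    refine nonneg_of_deriv _ (fun t => P2 t - F2 t) (fun t ht => (hP1 t ht).sub (hF1 t)) ?_ ?_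
    · show P1 0 - F1 0 = 0
      rw [hP10, hF10]; ring
    · intro t ht; exact sub_nonneg.2 (hF2le t ht)
  have hupper : ∀ t ∈ Set.Icc (0:ℝ) 1, 0 ≤ P t - F t := by
    refine nonneg_of_deriv _ (fun t => P1 t - F1 t) (fun t ht => (hP t ht).sub (hF t)) ?_ hupper1
    show P 0 - F 0 = 0
    rw [hP0, hF0]; ring
  have hlower1 : ∀ t ∈ Set.Icc (0:ℝ) 1, 0 ≤ F1 t - Q1 t := by
    refine nonneg_of_deriv _ (fun t => F2 t - Q2 t) (fun t ht => (hF1 t).sub (hQ1 t)) ?_ ?_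
    · show F1 0 - Q1 0 = 0
      rw [hQ10, hF10]; ring
    · intro t ht; exact sub_nonneg.2 (hQ2le t ht)
  have hlower : ∀ t ∈ Set.Icc (0:ℝ) 1, 0 ≤ F t - Q t := by
    refine nonneg_of_deriv _ (fun t => F1 t - Q1 t) (fun t ht => (hF t).sub (hQ t)) ?_ hlower1
    show F 0 - Q 0 = 0
    rw [hQ0, hF0]; ring
  have hmem1 : (1:ℝ) ∈ Set.Icc (0:ℝ) 1 := Set.right_mem_Icc.2 zero_le_one
  have hFP : F 1 ≤ P 1 := sub_nonneg.1 (hupper 1 hmem1)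
  have hQF : Q 1 ≤ F 1 := sub_nonneg.1 (hlower 1 hmem1)
  -- identify the χ²-type integral with exp (F 1)
  set R : ℝ := ∫ x, ((boltzmann K θ₀).rnDeriv (boltzmann K θ₁) x).toReal ∂(boltzmann K θ₀)
    with hRdef
  set c : ℝ := Zf K θ₁ / Zf K θ₀ with hcdef
  have hc0 : 0 < c := div_pos (Zpos hKcomp hKint θ₁) (Zpos hKcomp hKint θ₀)
  set G : EuclideanSpace ℝ (Fin n) → ℝ≥0∞ := fun x => ENNReal.ofReal (c * Real.exp ⟪θ₀ - θ₁, x⟫) with hGdef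
  have hGmeas : Measurable G := by
    apply ENNReal.measurable_ofReal.comp
    exact (continuous_const.mul (contExp (θ₀ - θ₁))).measurable
  have hd1meas : Measurable fun x : EuclideanSpace ℝ (Fin n) => ENNReal.ofReal (Real.exp ⟪θ₁, x⟫) :=
    ENNReal.measurable_ofReal.comp (contExp θ₁).measurable
  have hkey : (boltzmann K θ₁).withDensity G = boltzmann K θ₀ := by
    rw [boltzmann_eq hKcomp θ₁, boltzmann_eq hKcomp θ₀, withDensity_smul_measure,
      ← withDensity_mul _ hd1meas hGmeas]
    have hfun : ((fun x : EuclideanSpace ℝ (Fin n) => ENNReal.ofReal (Real.exp ⟪θ₁, x⟫)) * G)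
        = fun x => ENNReal.ofReal c * ENNReal.ofReal (Real.exp ⟪θ₀, x⟫) := by
      funext x
      rw [Pi.mul_apply, hGdef]
      dsimp only
      rw [← ENNReal.ofReal_mul (Real.exp_pos _).le, ← ENNReal.ofReal_mul hc0.le]
      congr 1
      rw [show Real.exp ⟪θ₁, x⟫ * (c * Real.exp ⟪θ₀ - θ₁, x⟫)
          = c * (Real.exp ⟪θ₁, x⟫ * Real.exp ⟪θ₀ - θ₁, x⟫) by ring,
        ← Real.exp_add, ← inner_add_left, show θ₁ + (θ₀ - θ₁) = θ₀ by abel]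
    rw [hfun]
    have : ((volume.restrict K).withDensity
        fun x => ENNReal.ofReal c * ENNReal.ofReal (Real.exp ⟪θ₀, x⟫))
        = ENNReal.ofReal c • ((volume.restrict K).withDensity
          fun x => ENNReal.ofReal (Real.exp ⟪θ₀, x⟫)) := by
      exact withDensity_smul _ (ENNReal.measurable_ofReal.comp (contExp θ₀).measurable)
    rw [this, smul_smul]
    congr 1
    rw [hcdef, ENNReal.ofReal_div_of_pos (Zpos hKcomp hKint θ₀), div_eq_mul_inv,
      ← mul_assoc, ENNReal.inv_mul_cancel (by simp [Zpos hKcomp hKint θ₁]) ENNReal.ofReal_ne_top,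
      one_mul]
  haveI hprob1 : IsProbabilityMeasure (boltzmann K θ₁) := isProb hKcomp hKint θ₁
  have hae : (boltzmann K θ₀).rnDeriv (boltzmann K θ₁) =ᵐ[boltzmann K θ₁] G := by
    conv_lhs => rw [← hkey]
    exact Measure.rnDeriv_withDensity _ hGmeas
  have hac : boltzmann K θ₀ ≪ boltzmann K θ₁ := by
    rw [← hkey]; exact withDensity_absolutelyContinuous _ _
  have hae0 : (boltzmann K θ₀).rnDeriv (boltzmann K θ₁) =ᵐ[boltzmann K θ₀] G :=
    hae.filter_mono hac.ae_le
  have hR1 : R = ∫ x, c * Real.exp ⟪θ₀ - θ₁, x⟫ ∂(boltzmann K θ₀) := by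
    rw [hRdef]
    refine integral_congr_ae (hae0.mono fun x hx => ?_)
    show ((boltzmann K θ₀).rnDeriv (boltzmann K θ₁) x).toReal = c * Real.exp ⟪θ₀ - θ₁, x⟫
    rw [hx, hGdef]
    exact ENNReal.toReal_ofReal (mul_nonneg hc0.le (Real.exp_pos _).le)
  have hθ_sub : θ₀ - θ₁ = -u := by rw [hu]; abel
  have hone : θ₀ + (1:ℝ) • u = θ₁ := by rw [one_smul, hu]; abel
  have hzero : θ₀ + (0:ℝ) • u = θ₀ := by rw [zero_smul, add_zero]
  have hR2 : R = (h 0)⁻¹ * (c * h (-1)) := by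
    rw [hR1, integral_boltzmann hKcomp hKint θ₀ (fun x => c * Real.exp ⟪θ₀ - θ₁, x⟫)]
    rw [smul_eq_mul]
    congr 1
    · rw [hhdef]; dsimp only; rw [hzero]; rfl
    · rw [← integral_const_mul]
      refine setIntegral_congr_fun (measK hKcomp) fun x _ => ?_
      rw [smul_eq_mul, hθ_sub]
      have : θ₀ + (-1:ℝ) • u = θ₀ + -u := by rw [neg_one_smul]
      rw [this, inner_add_left, Real.exp_add]
      ring
  have hch : c = h 1 / h 0 := by
    rw [hcdef, hhdef]
    dsimp only
    rw [hone, hzero]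
    rfl
  have hRF : R = Real.exp (F 1) := by
    rw [hFdef]
    dsimp only
    rw [hgdef]
    dsimp only
    rw [show (2:ℝ) * Real.log (h 0) = Real.log ((h 0) ^ 2) by rw [Real.log_pow]; push_cast; ring]
    rw [Real.exp_sub, Real.exp_add, Real.exp_log (hpos 1), Real.exp_log (hpos (-1)),
      Real.exp_log (pow_pos (hpos 0) 2)]
    rw [hR2, hch]
    field_simp
  -- final bounds
  have hΔ1 : 0 < 1 - Δ := by linarith
  constructor
  · rw [← hΔdef] at *
    rw [hRF]
    apply Real.exp_le_exp.2
    refine le_trans (le_of_eq ?_) hQF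
    rw [hQdef]
    dsimp only
    ring
  · rw [← hΔdef] at *
    rw [hRF]
    have hPval : Real.exp (P 1) = Real.exp (-2 * Δ) / (1 - Δ) ^ 2 := by
      rw [hPdef]
      dsimp only
      rw [show -(2 * Δ) * 1 - 2 * Real.log (1 - Δ * 1)
          = -2 * Δ - Real.log ((1 - Δ) ^ 2) by rw [Real.log_pow]; push_cast; ring_nf]
      rw [Real.exp_sub, Real.exp_log (by positivity : (0:ℝ) < (1 - Δ) ^ 2)]
    rw [← hPval]
    exact Real.exp_le_exp.2 hFP
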